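/- arXiv:1004.3617 — 3 statements merged into one kernel-verified Lean document; each statement's English description precedes it below -/
import Mathlib

section
/- For a right stochastic matrix A, the spectral radius of Π^⊥ A equals |λ₂(A)|, the second largest eigenvalue of A in absolute value (counting multiplicity, with one copy of the eigenvalue 1 associated to the all-ones eigenvector removed). -/
open Matrix

def IsStochastic {N : ℕ} (A : Matrix (Fin N) (Fin N) ℝ) : Prop :=
  (∀ i j, 0 ≤ A i j) ∧ ∀ i, ∑ j, A i j = 1

noncomputable def Pi0 (N : ℕ) : Matrix (Fin N) (Fin N) ℝ :=
  Matrix.of fun _ _ => (N : ℝ)⁻¹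

noncomputable def Pperp (N : ℕ) : Matrix (Fin N) (Fin N) ℝ := 1 - Pi0 N

/-- Spectral radius: maximum modulus of the (complex) eigenvalues. -/
noncomputable def specRad {N : ℕ} (B : Matrix (Fin N) (Fin N) ℂ) : ℝ :=
  ((B.charpoly.roots).map fun z => ‖z‖).foldr max 0

/-- `|λ₂(A)|`: the largest modulus among the eigenvalues of `A` (with multiplicity)
after removing one copy of the eigenvalue `1` (the one with the all-ones eigenvector). -/
noncomputable def lam2abs {N : ℕ} (A : Matrix (Fin N) (Fin N) ℝ) : ℝ :=
  ((((A.map (Complex.ofReal ·)).charpoly.roots).erase 1).map fun z => ‖z‖).foldr max 0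

open Polynomial

lemma eval_charpoly_aux {N : ℕ} (M : Matrix (Fin N) (Fin N) ℂ) (x : ℂ) :
    M.charpoly.eval x = (x • (1 : Matrix (Fin N) (Fin N) ℂ) - M).det := by
  rw [Matrix.charpoly, ← Polynomial.coe_evalRingHom, RingHom.map_det]
  congr 1
  ext i j
  by_cases h : i = j
  · subst h
    simp [Matrix.charmatrix_apply_eq, Matrix.one_apply_eq]
  · simp [Matrix.charmatrix_apply_ne M i j h, Matrix.one_apply_ne h]

lemma nonneg_foldr_max (s : Multiset ℝ) : 0 ≤ s.foldr max 0 := by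
  induction s using Multiset.induction_on with
  | empty => simp
  | cons a s ih => rw [Multiset.foldr_cons]; exact le_max_of_le_right ih

lemma key_poly {N : ℕ} (hN : 0 < N) (A : Matrix (Fin N) (Fin N) ℝ) (hA : IsStochastic A) :
    (X - C 1) * ((Pperp N * A).map (Complex.ofReal ·)).charpoly
      = X * ((A.map (Complex.ofReal ·)).charpoly) := by
  set A' := (A.map (Complex.ofReal ·)) with hA'def
  set B := ((Pperp N * A).map (Complex.ofReal ·)) with hBdef
  have hqne : A'.charpoly ≠ 0 := A'.charpoly_monic.ne_zero
  apply Polynomial.eq_of_infinite_eval_eq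
  have hfin : ({1} ∪ {x : ℂ | A'.charpoly.IsRoot x}).Finite :=
    (Set.finite_singleton 1).union (Polynomial.finite_setOf_isRoot hqne)
  refine Set.Infinite.mono ?_ hfin.infinite_compl
  intro x hx
  simp only [Set.mem_compl_iff, Set.mem_union, Set.mem_singleton_iff, Set.mem_setOf_eq,
    not_or] at hx
  obtain ⟨hx1, hxroot⟩ := hx
  have hx1' : x - 1 ≠ 0 := sub_ne_zero.mpr hx1
  set M : Matrix (Fin N) (Fin N) ℂ := x • (1 : Matrix (Fin N) (Fin N) ℂ) - A' with hMdef
  have hdet : M.det ≠ 0 := by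
    rw [← eval_charpoly_aux]; exact hxroot
  have hdetu : IsUnit M.det := Ne.isUnit hdet
  set u : Fin N → ℂ := fun _ => (N : ℂ)⁻¹ with hu
  set v : Fin N → ℂ := fun j => ∑ k, (A k j : ℂ) with hv
  have hNne : (N : ℂ) ≠ 0 := Nat.cast_ne_zero.mpr hN.ne'
  have hrowsum : ∀ i, ∑ j, (A i j : ℂ) = 1 := by
    intro i
    rw [← Complex.ofReal_sum, hA.2 i, Complex.ofReal_one]
  -- decomposition
  have hdecomp : x • (1 : Matrix (Fin N) (Fin N) ℂ) - B = M + replicateCol Unit u * replicateRow Unit v := by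
    ext i j
    have hB : B i j = (A i j : ℂ) - (N : ℂ)⁻¹ * ∑ k, (A k j : ℂ) := by
      have : (Pperp N * A) i j = A i j - (N:ℝ)⁻¹ * ∑ k, A k j := by
        simp [Pperp, Pi0, Matrix.mul_apply, Matrix.sub_apply, sub_mul,
          Finset.sum_sub_distrib, Matrix.one_apply, ite_mul, Finset.mul_sum]
      rw [hBdef]
      simp only [Matrix.map_apply, this]
      push_cast
      ring
    simp only [hMdef, Matrix.add_apply, Matrix.sub_apply, Matrix.smul_apply, hB,
      Matrix.replicateCol_apply, Matrix.replicateRow_apply, hA'def, Matrix.map_apply, Matrix.mul_apply,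
      Finset.univ_unique, Finset.sum_singleton, hu, hv, smul_eq_mul]
    ring
  -- eigen relation
  have hmulvec : M *ᵥ u = (x - 1) • u := by
    funext i
    have h1 : (M *ᵥ u) i = (∑ j, M i j) * (N : ℂ)⁻¹ := by
      simp [Matrix.mulVec, dotProduct, hu, Finset.sum_mul]
    have h2 : ∑ j, M i j = x - 1 := by
      simp [hMdef, Matrix.sub_apply, Matrix.smul_apply, Matrix.one_apply,
        Finset.sum_sub_distrib, mul_ite, hrowsum i, hA'def, Matrix.map_apply]
    rw [h1, h2]
    simp [hu, mul_comm]
  have h3 : M * replicateCol Unit u = (x - 1) • replicateCol Unit u := by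
    rw [← Matrix.replicateCol_mulVec, hmulvec]
    ext i j
    simp
  have h4 : M⁻¹ * replicateCol Unit u = (x - 1)⁻¹ • replicateCol Unit u := by
    have h5 : replicateCol Unit u = (x - 1) • (M⁻¹ * replicateCol Unit u) := by
      calc replicateCol Unit u = M⁻¹ * (M * replicateCol Unit u) := by
            rw [← Matrix.mul_assoc, Matrix.nonsing_inv_mul M hdetu, Matrix.one_mul]
        _ = (x - 1) • (M⁻¹ * replicateCol Unit u) := by rw [h3, Matrix.mul_smul]
    rw [eq_comm, inv_smul_eq_iff₀ hx1']
    exact h5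
  have hvdotu : v ⬝ᵥ u = 1 := by
    have hsum : ∑ j, v j = (N : ℂ) := by
      rw [hv]
      rw [Finset.sum_comm]
      simp [hrowsum]
    simp only [dotProduct, hu]
    rw [← Finset.sum_mul, hsum, mul_inv_cancel₀ hNne]
  have hdetB : (x • (1 : Matrix (Fin N) (Fin N) ℂ) - B).det = M.det * (1 + (x - 1)⁻¹) := by
    rw [hdecomp, Matrix.det_add_replicateCol_mul_replicateRow hdetu u v]
    congr 1
    rw [Matrix.mul_assoc, h4, Matrix.mul_smul, Matrix.det_unique]
    simp [Matrix.add_apply, Matrix.one_apply_eq, Matrix.smul_apply, hvdotu]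
  simp only [Set.mem_setOf_eq, eval_mul, eval_sub, eval_X, eval_C, eval_charpoly_aux]
  rw [hdetB, ← hMdef]
  field_simp
  ring

/-- For a right stochastic matrix `A`, the spectral radius of `Π^⊥ A` equals `|λ₂(A)|`. -/
theorem specRad_Pperp_mul_eq_lam2abs {N : ℕ} (hN : 0 < N)
    (A : Matrix (Fin N) (Fin N) ℝ) (hA : IsStochastic A) :
    specRad ((Pperp N * A).map (Complex.ofReal ·)) = lam2abs A := by
  set A' := (A.map (Complex.ofReal ·)) with hA'def
  set B := ((Pperp N * A).map (Complex.ofReal ·)) with hBdef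
  have hkey := key_poly hN A hA
  have hpne : B.charpoly ≠ 0 := B.charpoly_monic.ne_zero
  have hqne : A'.charpoly ≠ 0 := A'.charpoly_monic.ne_zero
  have hXne : (X : ℂ[X]) ≠ 0 := Polynomial.X_ne_zero
  have hXCne : (X - C (1 : ℂ)) ≠ 0 := Polynomial.X_sub_C_ne_zero 1
  have hroots : ({1} : Multiset ℂ) + B.charpoly.roots = {0} + A'.charpoly.roots := by
    rw [← Polynomial.roots_X_sub_C (1 : ℂ), ← Polynomial.roots_X (R := ℂ),
      ← Polynomial.roots_mul (mul_ne_zero hXCne hpne),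
      ← Polynomial.roots_mul (mul_ne_zero hXne hqne), hkey]
  have hcons : (1 : ℂ) ::ₘ B.charpoly.roots = (0 : ℂ) ::ₘ A'.charpoly.roots := by
    simpa [Multiset.singleton_add] using hroots
  have hBroots : B.charpoly.roots = (0 : ℂ) ::ₘ (A'.charpoly.roots.erase 1) := by
    have h1 := congrArg (fun s => Multiset.erase s (1 : ℂ)) hcons
    simp only [Multiset.erase_cons_head] at h1
    rw [h1, Multiset.erase_cons_tail _ (by norm_num : (0 : ℂ) ≠ 1)]
  show specRad B = lam2abs A
  unfold specRad lam2abs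
  rw [hBroots, ← hA'def, Multiset.map_cons, Multiset.foldr_cons, norm_zero]
  exact max_eq_right (nonneg_foldr_max _)
end

section
/- For the random sequence X(t) = A(t)X(t−1) with i.i.d. stochastic matrices A(t) and fixed initial state x, the following are equivalent: (1) Π^⊥X(t) → 0 in probability; (2) E[‖Π^⊥X(t)‖] → 0 (stability in L¹); (3) Π^⊥X(t) → 0 almost surely. -/
open Matrix Filter MeasureTheory ProbabilityTheory

noncomputable instance matrixMeasurableSpace {N : ℕ} : MeasurableSpace (Matrix (Fin N) (Fin N) ℝ) :=
  MeasurableSpace.pi (m := fun _ : Fin N => MeasurableSpace.pi)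

section Det
variable {N : ℕ} [NeZero N]

noncomputable def vmax (y : Fin N → ℝ) : ℝ := Finset.univ.sup' Finset.univ_nonempty y
noncomputable def vmin (y : Fin N → ℝ) : ℝ := Finset.univ.inf' Finset.univ_nonempty y
noncomputable def osc (y : Fin N → ℝ) : ℝ := vmax y - vmin y

lemma le_vmax (y : Fin N → ℝ) (i : Fin N) : y i ≤ vmax y :=
  Finset.le_sup' y (Finset.mem_univ i)

lemma vmin_le (y : Fin N → ℝ) (i : Fin N) : vmin y ≤ y i :=
  Finset.inf'_le y (Finset.mem_univ i)

lemma vmin_le_vmax (y : Fin N → ℝ) : vmin y ≤ vmax y :=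
  (vmin_le y (Classical.arbitrary _)).trans (le_vmax y _)

lemma osc_nonneg (y : Fin N → ℝ) : 0 ≤ osc y := sub_nonneg.2 (vmin_le_vmax y)

lemma mulVec_le_vmax {A : Matrix (Fin N) (Fin N) ℝ} (hA : IsStochastic A)
    (y : Fin N → ℝ) (i : Fin N) : A.mulVec y i ≤ vmax y := by
  have : A.mulVec y i ≤ ∑ j, A i j * vmax y := by
    rw [Matrix.mulVec, dotProduct]
    exact Finset.sum_le_sum fun j _ => mul_le_mul_of_nonneg_left (le_vmax y j) (hA.1 i j)
  simpa [← Finset.sum_mul, hA.2 i] using this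

lemma vmin_le_mulVec {A : Matrix (Fin N) (Fin N) ℝ} (hA : IsStochastic A)
    (y : Fin N → ℝ) (i : Fin N) : vmin y ≤ A.mulVec y i := by
  have : ∑ j, A i j * vmin y ≤ A.mulVec y i := by
    rw [Matrix.mulVec, dotProduct]
    exact Finset.sum_le_sum fun j _ => mul_le_mul_of_nonneg_left (vmin_le y j) (hA.1 i j)
  simpa [← Finset.sum_mul, hA.2 i] using this

lemma vmax_mulVec_le {A : Matrix (Fin N) (Fin N) ℝ} (hA : IsStochastic A)
    (y : Fin N → ℝ) : vmax (A.mulVec y) ≤ vmax y :=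
  Finset.sup'_le _ _ fun i _ => mulVec_le_vmax hA y i

lemma vmin_le_vmin_mulVec {A : Matrix (Fin N) (Fin N) ℝ} (hA : IsStochastic A)
    (y : Fin N → ℝ) : vmin y ≤ vmin (A.mulVec y) :=
  Finset.le_inf' _ _ fun i _ => vmin_le_mulVec hA y i

lemma osc_mulVec_le {A : Matrix (Fin N) (Fin N) ℝ} (hA : IsStochastic A)
    (y : Fin N → ℝ) : osc (A.mulVec y) ≤ osc y :=
  sub_le_sub (vmax_mulVec_le hA y) (vmin_le_vmin_mulVec hA y)

noncomputable def avg (y : Fin N → ℝ) : ℝ := (N : ℝ)⁻¹ * ∑ j, y j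

lemma vmin_le_avg (y : Fin N → ℝ) : vmin y ≤ avg y := by
  have hN : (0:ℝ) < N := by exact_mod_cast Nat.pos_of_ne_zero (NeZero.ne N)
  have h : (N : ℝ) * vmin y ≤ ∑ j, y j := by
    have := Finset.sum_le_sum (fun j (_ : j ∈ Finset.univ) => vmin_le y j)
    simpa [Finset.sum_const, Finset.card_univ, nsmul_eq_mul] using this
  rw [avg, ← div_eq_inv_mul, le_div_iff₀ hN]
  linarith
lemma avg_le_vmax (y : Fin N → ℝ) : avg y ≤ vmax y := by
  have hN : (0:ℝ) < N := by exact_mod_cast Nat.pos_of_ne_zero (NeZero.ne N)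
  have h : ∑ j, y j ≤ (N : ℝ) * vmax y := by
    have := Finset.sum_le_sum (fun j (_ : j ∈ Finset.univ) => le_vmax y j)
    simpa [Finset.sum_const, Finset.card_univ, nsmul_eq_mul] using this
  rw [avg, ← div_eq_inv_mul, div_le_iff₀ hN]
  linarith

lemma Pperp_mulVec_apply (y : Fin N → ℝ) (i : Fin N) :
    (Pperp N).mulVec y i = y i - avg y := by
  have h1 : (Pperp N).mulVec y = y - (Pi0 N).mulVec y := by
    rw [Pperp, Matrix.sub_mulVec, Matrix.one_mulVec]
  have h2 : (Pi0 N).mulVec y i = avg y := by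
    simp [Pi0, Matrix.mulVec, dotProduct, avg, Finset.mul_sum]
  simp [h1, h2]

lemma norm_Pperp_le_osc (y : Fin N → ℝ) : ‖(Pperp N).mulVec y‖ ≤ osc y := by
  rw [pi_norm_le_iff_of_nonneg (osc_nonneg y)]
  intro i
  rw [Pperp_mulVec_apply, Real.norm_eq_abs, abs_le]
  have h1 := vmin_le y i; have h2 := le_vmax y i
  have h3 := vmin_le_avg y; have h4 := avg_le_vmax y
  constructor <;> [skip; skip] <;> simp [osc] <;> linarith

lemma osc_le_two_norm (y : Fin N → ℝ) : osc y ≤ 2 * ‖(Pperp N).mulVec y‖ := by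
  obtain ⟨i, _, hi⟩ := Finset.exists_mem_eq_sup' (Finset.univ_nonempty (α := Fin N)) y
  obtain ⟨j, _, hj⟩ := Finset.exists_mem_eq_inf' (Finset.univ_nonempty (α := Fin N)) y
  have hni : y i - avg y ≤ ‖(Pperp N).mulVec y‖ := by
    have := norm_le_pi_norm ((Pperp N).mulVec y) i
    rw [Real.norm_eq_abs, Pperp_mulVec_apply] at this
    exact (le_abs_self _).trans this
  have hnj : avg y - y j ≤ ‖(Pperp N).mulVec y‖ := by
    have := norm_le_pi_norm ((Pperp N).mulVec y) j
    rw [Real.norm_eq_abs, Pperp_mulVec_apply] at this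
    have h2 : -(y j - avg y) ≤ ‖(Pperp N).mulVec y‖ := (neg_le_abs _).trans this
    linarith
  have hosc : osc y = (y i - avg y) + (avg y - y j) := by
    rw [osc, vmax, vmin, hi, hj]; ring
  linarith

end Det

/-- For the random dynamics `X(t) = A(t) X(t-1)` driven by i.i.d. random stochastic
matrices with fixed initial state `x`, stability of `Π^⊥ X(t)` in probability,
in `L¹`, and almost surely are all equivalent. -/
theorem projected_stability_three_modes_equiv {N : ℕ} {Ω : Type*} [MeasurableSpace Ω]
    (P : Measure Ω) [IsProbabilityMeasure P]
    (A : ℕ → Ω → Matrix (Fin N) (Fin N) ℝ)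
    (hmeas : ∀ t, Measurable (A t))
    (hstoch : ∀ t ω, IsStochastic (A t ω))
    (hindep : iIndepFun A P)
    (hident : ∀ s t, Measure.map (A s) P = Measure.map (A t) P)
    (x : Fin N → ℝ) (X : ℕ → Ω → Fin N → ℝ)
    (hX0 : X 0 = fun _ => x)
    (hrec : ∀ t ω, X (t + 1) ω = (A (t + 1) ω).mulVec (X t ω)) :
    ((∀ ε > (0:ℝ), Tendsto (fun t => P {ω | ε ≤ ‖(Pperp N).mulVec (X t ω)‖})
        atTop (nhds 0)) ↔
      Tendsto (fun t => ∫ ω, ‖(Pperp N).mulVec (X t ω)‖ ∂P) atTop (nhds 0)) ∧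
    (Tendsto (fun t => ∫ ω, ‖(Pperp N).mulVec (X t ω)‖ ∂P) atTop (nhds 0) ↔
      ∀ᵐ ω ∂P, Tendsto (fun t => (Pperp N).mulVec (X t ω)) atTop (nhds 0)) := by
  rcases Nat.eq_zero_or_pos N with hN | hN
  · subst hN
    have hz : ∀ t ω, (Pperp 0).mulVec (X t ω) = (0 : Fin 0 → ℝ) :=
      fun t ω => Subsingleton.elim _ _
    have h1 : ∀ ε > (0:ℝ), Tendsto (fun t => P {ω | ε ≤ ‖(Pperp 0).mulVec (X t ω)‖})
        atTop (nhds 0) := by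
      intro ε hε
      have : ∀ t, {ω | ε ≤ ‖(Pperp 0).mulVec (X t ω)‖} = (∅ : Set Ω) := by
        intro t
        ext ω
        simp only [Set.mem_setOf_eq, hz t ω, norm_zero, Set.mem_empty_iff_false, iff_false,
          not_le]
        exact hε
      simp only [this, measure_empty]; exact tendsto_const_nhds
    have h2 : Tendsto (fun t => ∫ ω, ‖(Pperp 0).mulVec (X t ω)‖ ∂P) atTop (nhds 0) := by
      have : ∀ t, ∫ ω, ‖(Pperp 0).mulVec (X t ω)‖ ∂P = 0 := by
        intro t
        simp only [hz, norm_zero, integral_zero]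
      simp only [this]; exact tendsto_const_nhds
    have h3 : ∀ᵐ ω ∂P, Tendsto (fun t => (Pperp 0).mulVec (X t ω)) atTop (nhds 0) := by
      filter_upwards with ω
      simp only [hz]; exact tendsto_const_nhds
    exact ⟨⟨fun _ => h2, fun _ => h1⟩, ⟨fun _ => h3, fun _ => h2⟩⟩
  haveI : NeZero N := ⟨hN.ne'⟩
  -- measurability of X t
  have hXm : ∀ t, Measurable (X t) := by
    intro t; induction t with
    | zero => rw [hX0]; exact measurable_const
    | succ t ih =>
      have heq : X (t + 1) = fun ω => (A (t + 1) ω).mulVec (X t ω) := funext (hrec t)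
      rw [heq]
      refine measurable_pi_lambda _ fun i => ?_
      simp only [Matrix.mulVec, dotProduct]
      refine Finset.measurable_sum _ fun j _ => Measurable.mul ?_ ?_
      · exact ((measurable_pi_apply j).comp ((measurable_pi_apply i).comp (hmeas (t + 1))))
      · exact (measurable_pi_apply j).comp ih
  have hPm : ∀ t, Measurable fun ω => (Pperp N).mulVec (X t ω) := by
    intro t
    refine measurable_pi_lambda _ fun i => ?_
    simp only [Matrix.mulVec, dotProduct]
    exact Finset.measurable_sum _ fun j _ =>
      (measurable_const.mul ((measurable_pi_apply j).comp (hXm t)))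
  have hfm : ∀ t, Measurable fun ω => ‖(Pperp N).mulVec (X t ω)‖ := fun t => (hPm t).norm
  -- oscillation is antitone and bounded
  have hg_anti : ∀ ω, Antitone fun t => osc (X t ω) := by
    intro ω
    refine antitone_nat_of_succ_le fun t => ?_
    rw [hrec t ω]
    exact osc_mulVec_le (hstoch (t + 1) ω) _
  have hg_bd : ∀ t ω, osc (X t ω) ≤ osc x := by
    intro t ω
    have := hg_anti ω (Nat.zero_le t)
    simpa [hX0] using this
  have hf_le_g : ∀ t ω, ‖(Pperp N).mulVec (X t ω)‖ ≤ osc (X t ω) :=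
    fun t ω => norm_Pperp_le_osc _
  have hf_bd : ∀ t ω, ‖(Pperp N).mulVec (X t ω)‖ ≤ osc x :=
    fun t ω => (hf_le_g t ω).trans (hg_bd t ω)
  have hf_int : ∀ t, Integrable (fun ω => ‖(Pperp N).mulVec (X t ω)‖) P := by
    intro t
    refine (integrable_const (osc x)).mono' (hfm t).aestronglyMeasurable ?_
    filter_upwards with ω
    simpa [abs_of_nonneg (norm_nonneg _)] using hf_bd t ω
  -- (3) → (1)
  have h31 : (∀ᵐ ω ∂P, Tendsto (fun t => (Pperp N).mulVec (X t ω)) atTop (nhds 0)) →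
      ∀ ε > (0:ℝ), Tendsto (fun t => P {ω | ε ≤ ‖(Pperp N).mulVec (X t ω)‖})
        atTop (nhds 0) := by
    intro h3 ε hε
    have := tendstoInMeasure_of_tendsto_ae (μ := P)
      (f := fun t ω => (Pperp N).mulVec (X t ω)) (g := fun _ => 0)
      (fun t => (hPm t).aestronglyMeasurable) h3
    have := tendstoInMeasure_iff_dist.1 this ε hε
    simpa [dist_zero_right] using this
  -- (1) → (2)
  have h12 : (∀ ε > (0:ℝ), Tendsto (fun t => P {ω | ε ≤ ‖(Pperp N).mulVec (X t ω)‖})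
        atTop (nhds 0)) →
      Tendsto (fun t => ∫ ω, ‖(Pperp N).mulVec (X t ω)‖ ∂P) atTop (nhds 0) := by
    intro h1
    rw [NormedAddCommGroup.tendsto_nhds_zero]
    intro ε hε
    set C := osc x with hCdef
    have hC0 : 0 ≤ C := osc_nonneg x
    have hhalf : 0 < ε / 2 := by linarith
    set S : ℕ → Set Ω := fun t => {ω | ε / 2 ≤ ‖(Pperp N).mulVec (X t ω)‖} with hSdef
    have hSm : ∀ t, MeasurableSet (S t) := fun t => measurableSet_le measurable_const (hfm t)
    have hp := h1 (ε / 2) hhalf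
    have htR : Tendsto (fun t => (P (S t)).toReal) atTop (nhds 0) := by
      have h := (ENNReal.tendsto_toReal ENNReal.zero_ne_top).comp hp
      exact h
    have hδ : 0 < ε / (2 * (C + 1)) := by positivity
    filter_upwards [htR.eventually (gt_mem_nhds hδ)] with t ht
    have hint : 0 ≤ ∫ ω, ‖(Pperp N).mulVec (X t ω)‖ ∂P :=
      integral_nonneg fun ω => norm_nonneg _
    rw [Real.norm_eq_abs, abs_of_nonneg hint]
    -- pointwise bound
    have hptw : ∀ ω, ‖(Pperp N).mulVec (X t ω)‖ ≤ ε / 2 + (S t).indicator (fun _ => C) ω := by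
      intro ω
      by_cases hω : ω ∈ S t
      · rw [Set.indicator_of_mem hω]
        have := hf_bd t ω
        linarith
      · rw [Set.indicator_of_notMem hω]
        have : ¬ ε / 2 ≤ ‖(Pperp N).mulVec (X t ω)‖ := hω
        push_neg at this
        linarith
    have hRint : Integrable (fun ω => ε / 2 + (S t).indicator (fun _ => C) ω) P :=
      (integrable_const _).add ((integrable_const C).indicator (hSm t))
    have hIle : ∫ ω, ‖(Pperp N).mulVec (X t ω)‖ ∂P
        ≤ ∫ ω, (ε / 2 + (S t).indicator (fun _ => C) ω) ∂P :=
      integral_mono (hf_int t) hRint hptw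
    have hIright : ∫ ω, (ε / 2 + (S t).indicator (fun _ => C) ω) ∂P
        = ε / 2 + (P (S t)).toReal * C := by
      rw [integral_add (integrable_const _) ((integrable_const C).indicator (hSm t)),
        integral_const, integral_indicator_const C (hSm t)]
      simp [measureReal_def]
    have hr0 : 0 ≤ (P (S t)).toReal := ENNReal.toReal_nonneg
    have hfin : (P (S t)).toReal * C < ε / 2 := by
      calc (P (S t)).toReal * C ≤ (ε / (2 * (C + 1))) * C := by
            apply mul_le_mul_of_nonneg_right ht.le hC0
        _ < ε / 2 := by
            rw [div_mul_eq_mul_div, div_lt_div_iff₀ (by positivity) (by norm_num)]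
            nlinarith
    linarith [hIle.trans_eq hIright]
  -- (2) → (3)
  have h23 : Tendsto (fun t => ∫ ω, ‖(Pperp N).mulVec (X t ω)‖ ∂P) atTop (nhds 0) →
      ∀ᵐ ω ∂P, Tendsto (fun t => (Pperp N).mulVec (X t ω)) atTop (nhds 0) := by
    intro h2
    set g : ℕ → Ω → ℝ := fun t ω => osc (X t ω) with hgdef
    have hgm : ∀ t, Measurable (g t) := by
      intro t
      have h1 : Measurable fun ω => vmax (X t ω) := by
        have hm : Measurable (Finset.univ.sup' (Finset.univ_nonempty (α := Fin N))
            (fun i (ω : Ω) => X t ω i)) :=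
          Finset.measurable_sup' _ (fun i _ => (measurable_pi_apply i).comp (hXm t))
        have he : (fun ω => vmax (X t ω)) = Finset.univ.sup' (Finset.univ_nonempty (α := Fin N))
            (fun i (ω : Ω) => X t ω i) := by
          funext ω
          rw [vmax, Finset.sup'_apply]
        rw [he]; exact hm
      have h2 : Measurable fun ω => vmin (X t ω) := by
        have hm : Measurable (Finset.univ.inf' (Finset.univ_nonempty (α := Fin N))
            (fun i (ω : Ω) => X t ω i)) :=
          Finset.inf'_induction _ _ (fun _f hf _g hg => hf.inf' hg)
            (fun i _ => (measurable_pi_apply i).comp (hXm t))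
        have he : (fun ω => vmin (X t ω)) = Finset.univ.inf' (Finset.univ_nonempty (α := Fin N))
            (fun i (ω : Ω) => X t ω i) := by
          funext ω
          rw [vmin, Finset.inf'_apply]
        rw [he]; exact hm
      exact h1.sub h2
    set L : Ω → ℝ := fun ω => ⨅ t, g t ω with hLdef
    have hbdd : ∀ ω, BddBelow (Set.range fun t => g t ω) :=
      fun ω => ⟨0, by rintro r ⟨t, rfl⟩; exact osc_nonneg _⟩
    have hL_tendsto : ∀ ω, Tendsto (fun t => g t ω) atTop (nhds (L ω)) :=
      fun ω => tendsto_atTop_ciInf (hg_anti ω) (hbdd ω)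
    have hLm : Measurable L :=
      measurable_of_tendsto_metrizable hgm (tendsto_pi_nhds.2 hL_tendsto)
    have hL_nonneg : ∀ ω, 0 ≤ L ω := fun ω => le_ciInf fun t => osc_nonneg _
    have hL_le : ∀ t ω, L ω ≤ g t ω := fun t ω => ciInf_le (hbdd ω) t
    have hL_int : Integrable L P := by
      refine (integrable_const (osc x)).mono' hLm.aestronglyMeasurable ?_
      filter_upwards with ω
      rw [Real.norm_eq_abs, abs_of_nonneg (hL_nonneg ω)]
      exact (hL_le 0 ω).trans (hg_bd 0 ω)
    have hIL0 : ∫ ω, L ω ∂P = 0 := by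
      refine le_antisymm ?_ (integral_nonneg hL_nonneg)
      have hle : ∀ t, ∫ ω, L ω ∂P ≤ 2 * ∫ ω, ‖(Pperp N).mulVec (X t ω)‖ ∂P := by
        intro t
        rw [show (2:ℝ) * ∫ ω, ‖(Pperp N).mulVec (X t ω)‖ ∂P
            = ∫ ω, 2 * ‖(Pperp N).mulVec (X t ω)‖ ∂P from (integral_const_mul 2 _).symm]
        refine integral_mono hL_int ((hf_int t).const_mul 2) fun ω => ?_
        exact (hL_le t ω).trans (osc_le_two_norm _)
      have h2' : Tendsto (fun t => 2 * ∫ ω, ‖(Pperp N).mulVec (X t ω)‖ ∂P) atTop (nhds 0) := by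
        have := h2.const_mul (2 : ℝ)
        simpa using this
      exact ge_of_tendsto h2' (Eventually.of_forall hle)
    have hL0 : ∀ᵐ ω ∂P, L ω = 0 := by
      have := (integral_eq_zero_iff_of_nonneg hL_nonneg hL_int).1 hIL0
      filter_upwards [this] with ω hω using hω
    filter_upwards [hL0] with ω hω
    rw [tendsto_zero_iff_norm_tendsto_zero]
    refine squeeze_zero (fun t => norm_nonneg _) (fun t => hf_le_g t ω) ?_
    rw [← hω] at *
    exact hL_tendsto ω
  exact ⟨⟨h12, fun h2 => h31 (h23 h2)⟩, ⟨h23, fun h3 => h12 (h31 h3)⟩⟩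
end

section
/- For the random consensus dynamics X(t) = A(t)X(t−1) driven by i.i.d. stochastic matrices with distribution μ, consensus in probability, consensus in L¹, and almost sure consensus (for all initial states x) are all equivalent. -/
open Matrix Filter MeasureTheory ProbabilityTheory

/-- Maximal pairwise coordinate difference `max_{i,j} |x_i - x_j|`. -/
noncomputable def diam {N : ℕ} (x : Fin N → ℝ) : ℝ := ⨆ i, ⨆ j, |x i - x j|

lemma abs_sub_le_diam {N : ℕ} (x : Fin N → ℝ) (i j : Fin N) : |x i - x j| ≤ diam x := by
  have h1 : |x i - x j| ≤ ⨆ j, |x i - x j| :=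
    le_ciSup (f := fun j => |x i - x j|) (Set.finite_range _).bddAbove j
  exact h1.trans (le_ciSup (f := fun i => ⨆ j, |x i - x j|) (Set.finite_range _).bddAbove i)

lemma diam_nonneg {N : ℕ} (x : Fin N → ℝ) : 0 ≤ diam x := by
  rcases isEmpty_or_nonempty (Fin N) with h | h
  · simp [diam, iSup_of_empty', Real.sSup_empty]
  · obtain ⟨i⟩ := h
    simpa using abs_sub_le_diam x i i

lemma diam_le {N : ℕ} {x : Fin N → ℝ} {c : ℝ} (hc : 0 ≤ c)
    (h : ∀ i j, |x i - x j| ≤ c) : diam x ≤ c :=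
  Real.iSup_le (fun i => Real.iSup_le (h i) hc) hc

lemma diam_mulVec_le {N : ℕ} {A : Matrix (Fin N) (Fin N) ℝ} (hA : IsStochastic A)
    (x : Fin N → ℝ) : diam (A.mulVec x) ≤ diam x := by
  refine diam_le (diam_nonneg x) fun i j => ?_
  have key : A.mulVec x i - A.mulVec x j = ∑ k, ∑ l, A i k * A j l * (x k - x l) := by
    have h1 : ∀ k, ∑ l, A i k * A j l * (x k - x l)
        = A i k * x k * (∑ l, A j l) - A i k * (∑ l, A j l * x l) := by
      intro k
      rw [Finset.mul_sum, Finset.mul_sum, ← Finset.sum_sub_distrib]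
      exact Finset.sum_congr rfl fun l _ => by ring
    have h2 : ∑ k, (A i k * x k - A i k * (∑ l, A j l * x l))
        = (∑ k, A i k * x k) - (∑ k, A i k) * (∑ l, A j l * x l) := by
      rw [Finset.sum_sub_distrib, Finset.sum_mul]
    simp only [h1, hA.2 j, mul_one, h2, hA.2 i, one_mul]
    simp [mulVec, dotProduct]
  calc |A.mulVec x i - A.mulVec x j|
      ≤ ∑ k, |∑ l, A i k * A j l * (x k - x l)| := by
        rw [key]; exact Finset.abs_sum_le_sum_abs _ _
    _ ≤ ∑ k, ∑ l, |A i k * A j l * (x k - x l)| :=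
        Finset.sum_le_sum fun k _ => Finset.abs_sum_le_sum_abs _ _
    _ ≤ ∑ k, ∑ l, A i k * A j l * diam x := by
        refine Finset.sum_le_sum fun k _ => Finset.sum_le_sum fun l _ => ?_
        rw [abs_mul, abs_of_nonneg (mul_nonneg (hA.1 i k) (hA.1 j l))]
        exact mul_le_mul_of_nonneg_left (abs_sub_le_diam x k l)
          (mul_nonneg (hA.1 i k) (hA.1 j l))
    _ = diam x := by
        simp only [← Finset.sum_mul, ← Finset.mul_sum]
        rw [hA.2 j]
        simp [hA.2 i, Finset.sum_mul]

/-- For the random consensus dynamics `X(t) = A(t) X(t-1)` driven by i.i.d. stochastic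
matrices, consensus in probability, consensus in `L¹`, and almost sure consensus
(for all initial states) are equivalent. -/
theorem consensus_three_modes_equiv {N : ℕ} {Ω : Type*} [MeasurableSpace Ω]
    (P : Measure Ω) [IsProbabilityMeasure P]
    (A : ℕ → Ω → Matrix (Fin N) (Fin N) ℝ)
    (hmeas : ∀ t, Measurable (A t))
    (hstoch : ∀ t ω, IsStochastic (A t ω))
    (hindep : iIndepFun A P)
    (hident : ∀ s t, Measure.map (A s) P = Measure.map (A t) P)
    (X : (Fin N → ℝ) → ℕ → Ω → Fin N → ℝ)
    (hX0 : ∀ x, X x 0 = fun _ => x)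
    (hrec : ∀ x t ω, X x (t + 1) ω = (A (t + 1) ω).mulVec (X x t ω)) :
    ((∀ x, ∀ ε > (0:ℝ),
        Tendsto (fun t => P {ω | ε ≤ diam (X x t ω)}) atTop (nhds 0)) ↔
      (∀ x, Tendsto (fun t => ∫ ω, diam (X x t ω) ∂P) atTop (nhds 0))) ∧
    ((∀ x, Tendsto (fun t => ∫ ω, diam (X x t ω) ∂P) atTop (nhds 0)) ↔
      (∀ x, ∀ᵐ ω ∂P, Tendsto (fun t => diam (X x t ω)) atTop (nhds 0))) := by
  -- notation
  set D : (Fin N → ℝ) → ℕ → Ω → ℝ := fun x t ω => diam (X x t ω) with hD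
  -- monotonicity
  have hanti : ∀ x ω, Antitone fun t => D x t ω := by
    intro x ω
    refine antitone_nat_of_succ_le fun t => ?_
    simp only [hD, hrec x t ω]
    exact diam_mulVec_le (hstoch (t + 1) ω) _
  have hnn : ∀ x t ω, 0 ≤ D x t ω := fun x t ω => diam_nonneg _
  have hbd : ∀ x t ω, D x t ω ≤ diam x := by
    intro x t ω
    have := hanti x ω (Nat.zero_le t)
    simpa [hD, hX0 x] using this
  -- measurability
  have hXmeas : ∀ x t, Measurable (X x t) := by
    intro x t
    induction t with
    | zero => rw [hX0]; exact measurable_const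
    | succ t ih =>
      have heq : (X x (t + 1)) = fun ω => (A (t + 1) ω).mulVec (X x t ω) := by
        funext ω; exact hrec x t ω
      rw [heq, measurable_pi_iff]
      intro i
      have heq2 : (fun ω => (A (t + 1) ω).mulVec (X x t ω) i)
          = fun ω => ∑ j, A (t + 1) ω i j * X x t ω j := by
        funext ω; simp [Matrix.mulVec, dotProduct]
      rw [heq2]
      refine Finset.measurable_sum _ fun j _ => Measurable.mul ?_ ?_
      · exact (measurable_pi_apply j).comp ((measurable_pi_apply i).comp (hmeas (t + 1)))
      · exact (measurable_pi_apply j).comp ih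
  have hDmeas : ∀ x t, Measurable (D x t) := by
    intro x t
    apply Measurable.iSup
    intro i
    apply Measurable.iSup
    intro j
    exact (((measurable_pi_apply i).comp (hXmeas x t)).sub
      ((measurable_pi_apply j).comp (hXmeas x t))).abs
  have hDint : ∀ x t, Integrable (D x t) P := by
    intro x t
    refine Integrable.mono' (integrable_const (diam x)) (hDmeas x t).aestronglyMeasurable ?_
    exact ae_of_all _ fun ω => by
      rw [Real.norm_eq_abs, abs_of_nonneg (hnn x t ω)]; exact hbd x t ω
  -- (a) probability ⇒ a.s.
  have as_of_prob :
      (∀ x, ∀ ε > (0:ℝ), Tendsto (fun t => P {ω | ε ≤ D x t ω}) atTop (nhds 0)) →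
      ∀ x, ∀ᵐ ω ∂P, Tendsto (fun t => D x t ω) atTop (nhds 0) := by
    intro h x
    have hnull : ∀ n : ℕ, P {ω | ∀ t, 1 / (n + 1 : ℝ) ≤ D x t ω} = 0 := by
      intro n
      have hεpos : (0:ℝ) < 1 / (n + 1 : ℝ) := by positivity
      have hsub : ∀ t, {ω | ∀ t, 1 / (n + 1 : ℝ) ≤ D x t ω}
          ⊆ {ω | 1 / (n + 1 : ℝ) ≤ D x t ω} := fun t ω hω => hω t
      have hle : ∀ t, P {ω | ∀ t, 1 / (n + 1 : ℝ) ≤ D x t ω}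
          ≤ P {ω | 1 / (n + 1 : ℝ) ≤ D x t ω} := fun t => measure_mono (hsub t)
      have := ge_of_tendsto' (h x _ hεpos) hle
      exact le_antisymm this zero_le
    have hae : ∀ᵐ ω ∂P, ∀ n : ℕ, ∃ t, D x t ω < 1 / (n + 1 : ℝ) := by
      rw [ae_all_iff]
      intro n
      have := hnull n
      rw [ae_iff]
      refine measure_mono_null ?_ this
      intro ω hω t
      simp only [Set.mem_setOf_eq, not_exists, not_lt] at hω
      exact hω t
    filter_upwards [hae] with ω hω
    rw [Metric.tendsto_atTop]
    intro ε hε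
    obtain ⟨n, hn⟩ := exists_nat_one_div_lt hε
    obtain ⟨t₀, ht₀⟩ := hω n
    refine ⟨t₀, fun t ht => ?_⟩
    rw [Real.dist_eq, sub_zero, abs_of_nonneg (hnn x t ω)]
    exact lt_of_le_of_lt (le_trans (hanti x ω ht) ht₀.le) hn
  -- (b) a.s. ⇒ L¹
  have L1_of_as :
      (∀ x, ∀ᵐ ω ∂P, Tendsto (fun t => D x t ω) atTop (nhds 0)) →
      ∀ x, Tendsto (fun t => ∫ ω, D x t ω ∂P) atTop (nhds 0) := by
    intro h x
    have : Tendsto (fun t => ∫ ω, D x t ω ∂P) atTop (nhds (∫ _ω, (0:ℝ) ∂P)) := by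
      refine tendsto_integral_of_dominated_convergence (fun _ => diam x)
        (fun t => (hDmeas x t).aestronglyMeasurable) (integrable_const _)
        (fun t => ae_of_all _ fun ω => ?_) (h x)
      rw [Real.norm_eq_abs, abs_of_nonneg (hnn x t ω)]; exact hbd x t ω
    simpa using this
  -- (c) L¹ ⇒ probability
  have prob_of_L1 :
      (∀ x, Tendsto (fun t => ∫ ω, D x t ω ∂P) atTop (nhds 0)) →
      ∀ x, ∀ ε > (0:ℝ), Tendsto (fun t => P {ω | ε ≤ D x t ω}) atTop (nhds 0) := by
    intro h x ε hε
    have hfin : ∀ t, P {ω | ε ≤ D x t ω} ≠ ⊤ := fun t => measure_ne_top P _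
    rw [← ENNReal.tendsto_toReal_iff hfin ENNReal.zero_ne_top, ENNReal.toReal_zero]
    have hmark : ∀ t, (P {ω | ε ≤ D x t ω}).toReal ≤ ε⁻¹ * ∫ ω, D x t ω ∂P := by
      intro t
      have := mul_meas_ge_le_integral_of_nonneg (μ := P)
        (ae_of_all _ (hnn x t)) (hDint x t) ε
      calc (P {ω | ε ≤ D x t ω}).toReal
          = ε⁻¹ * (ε * (P {ω | ε ≤ D x t ω}).toReal) := by
            field_simp
        _ ≤ ε⁻¹ * ∫ ω, D x t ω ∂P :=
            mul_le_mul_of_nonneg_left this (inv_nonneg.mpr hε.le)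
    have hlim : Tendsto (fun t => ε⁻¹ * ∫ ω, D x t ω ∂P) atTop (nhds 0) := by
      simpa using (h x).const_mul ε⁻¹
    refine squeeze_zero (fun t => ENNReal.toReal_nonneg) hmark hlim
  refine ⟨⟨fun h => L1_of_as (as_of_prob h), prob_of_L1⟩,
    ⟨fun h x => as_of_prob (prob_of_L1 h) x, L1_of_as⟩⟩
end
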